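/- Let ι be a finite type, S a nonempty subset of ℤ≥0^ι, and N(S) the associated Newton polyhedron. For any vector of weights ρ : (ι → ℝ) → ℝ, setting ν = min{ρ(σ) : σ ∈ S} (which exists), one has ρ(x) ≥ ν for every x ∈ N(S), and the value ν is attained on N(S); that is, the infimum of ρ on N(S) equals its minimum on S. -/
import Mathlib


open Pointwise

/-- A vector of weights on `ℝ^ι`: a linear map `ρ : (ι → ℝ) → ℝ` with `ρ(σ) > 0`
for every nonzero `σ` with all coordinates nonnegative. -/
def IsWeightVector {ι : Type*} (ρ : (ι → ℝ) →ₗ[ℝ] ℝ) : Prop :=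
  ∀ σ : ι → ℝ, (∀ i, 0 ≤ σ i) → σ ≠ 0 → 0 < ρ σ

/-- The Newton polyhedron of a set `S ⊆ ℤ≥0^ι`: the Minkowski sum of the convex
hull of `S` (viewed inside `ℝ^ι`) with the nonnegative orthant. -/
def newtonPolyhedron {ι : Type*} (S : Set (ι → ℕ)) : Set (ι → ℝ) :=
  convexHull ℝ ((fun σ : ι → ℕ => fun i => (σ i : ℝ)) '' S) + {x : ι → ℝ | ∀ i, 0 ≤ x i}

/-- For a nonempty `S ⊆ ℤ≥0^ι` and a vector of weights `ρ`, the
minimum `ν` of `ρ` on `S` exists, `ρ(x) ≥ ν` for every `x` in the Newton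
polyhedron `N(S)`, and `ν` is attained on `N(S)`; i.e. the infimum of `ρ` on
`N(S)` equals its minimum on `S`. -/
theorem weight_min_on_newton_polyhedron {ι : Type*} [Fintype ι]
    (ρ : (ι → ℝ) →ₗ[ℝ] ℝ) (hρ : IsWeightVector ρ)
    (S : Set (ι → ℕ)) (hS : S.Nonempty) :
    ∃ ν : ℝ, IsLeast ((fun σ : ι → ℕ => ρ (fun i => (σ i : ℝ))) '' S) ν ∧
      IsLeast (ρ '' newtonPolyhedron S) ν := by
  classical
  set c : ι → ℝ := fun i => ρ (fun j => if i = j then 1 else 0) with hc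
  have hcpos : ∀ i, 0 < c i := by
    intro i
    apply hρ
    · intro j; by_cases h : i = j <;> simp [h]
    · intro h
      have := congrFun h i
      simp at this
  have hρnonneg : ∀ z : ι → ℝ, (∀ i, 0 ≤ z i) → 0 ≤ ρ z := by
    intro z hz
    by_cases h : z = 0
    · simp [h]
    · exact (hρ z hz h).le
  set f : (ι → ℕ) → ℝ := fun σ => ρ (fun i => (σ i : ℝ)) with hf
  have hfsum : ∀ σ : ι → ℕ, f σ = ∑ i, (σ i : ℝ) * c i := by
    intro σ
    exact ρ.pi_apply_eq_sum_univ (fun i => (σ i : ℝ))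
  have hterm : ∀ (σ : ι → ℕ) (i : ι), (σ i : ℝ) * c i ≤ f σ := by
    intro σ i
    rw [hfsum]
    apply Finset.single_le_sum (f := fun i => (σ i : ℝ) * c i)
    · intro j _
      exact mul_nonneg (Nat.cast_nonneg _) (hcpos j).le
    · exact Finset.mem_univ i
  obtain ⟨σ0, hσ0⟩ := hS
  set T : Set (ι → ℕ) := {σ ∈ S | f σ ≤ f σ0} with hT
  have hTfin : T.Finite := by
    apply Set.Finite.subset (Set.Finite.pi (t := fun i => Set.Iic ⌈f σ0 / c i⌉₊)
      (fun i => Set.finite_Iic _))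
    intro σ ⟨_, hle⟩
    intro i _
    have h1 : (σ i : ℝ) * c i ≤ f σ0 := (hterm σ i).trans hle
    have h2 : (σ i : ℝ) ≤ f σ0 / c i := (le_div_iff₀ (hcpos i)).mpr h1
    simp only [Set.mem_Iic]
    exact_mod_cast h2.trans (Nat.le_ceil _)
  have hTne : T.Nonempty := ⟨σ0, hσ0, le_refl _⟩
  obtain ⟨σm, hσmT, hσmmin⟩ := Set.exists_min_image T f hTfin hTne
  set ν := f σm with hν
  have hlbS : ∀ σ ∈ S, ν ≤ f σ := by
    intro σ hσ
    by_cases h : f σ ≤ f σ0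
    · exact hσmmin σ ⟨hσ, h⟩
    · exact (hσmmin σ0 ⟨hσ0, le_refl _⟩).trans (not_le.mp h).le
  refine ⟨ν, ⟨⟨σm, hσmT.1, rfl⟩, ?_⟩, ⟨?_, ?_⟩⟩
  · rintro v ⟨σ, hσ, rfl⟩
    exact hlbS σ hσ
  · refine ⟨(fun i => (σm i : ℝ)), ?_, rfl⟩
    refine ⟨(fun i => (σm i : ℝ)), subset_convexHull ℝ _ ⟨σm, hσmT.1, rfl⟩, 0,
      fun i => le_refl _, by simp⟩
  · rintro v ⟨x, hx, rfl⟩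
    obtain ⟨y, hy, z, hz, rfl⟩ := hx
    have hyν : ν ≤ ρ y := by
      have hsub : (fun σ : ι → ℕ => fun i => (σ i : ℝ)) '' S ⊆ {w | ν ≤ ρ w} := by
        rintro _ ⟨σ, hσ, rfl⟩
        exact hlbS σ hσ
      have := convexHull_min hsub (convex_halfSpace_ge (LinearMap.isLinear ρ) ν)
      exact this hy
    have : ρ (y + z) = ρ y + ρ z := map_add ρ y z
    rw [this]
    linarith [hρnonneg z hz]
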